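/- Let G be a finite graph with vertex degrees at most d and let Φ be a fractional K-partition of G: a function assigning a nonnegative weight Φ(A) to each connected subset A ⊆ V(G) with |A| ≤ K, such that Σ_{A ∋ x} Φ(A) = 1 for every vertex x. For x ∈ V(G), define p(x) ∈ Prob(V(G)) by p(x)(y) = Σ_{A ∋ x, y∈A} Φ(A)/|A|, and define ∂Φ(x) = Σ_{A: x ∈ ∂A} Φ(A), where ∂A is the set of vertices of A adjacent to some vertex outside A. If x ~ y are adjacent vertices, then ‖p(x) − p(y)‖₁ ≤ ∂Φ(x) + ∂Φ(y). -/

import Mathlib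

open Finset

/-- The inner boundary of a finite vertex set: vertices of `A` with a neighbor outside `A`. -/
def innerBoundary {V : Type*} [Fintype V] [DecidableEq V]
    (G : SimpleGraph V) [DecidableRel G.Adj] (A : Finset V) : Finset V :=
  A.filter (fun v => ∃ w, w ∉ A ∧ G.Adj v w)

private lemma swapsum {V : Type*} [Fintype V] [DecidableEq V]
    (c : Finset V → Prop) [DecidablePred c] (f : Finset V → ℝ) :
    ∑ z : V, ∑ A ∈ univ.filter (fun A => c A ∧ z ∈ A), f A
      = ∑ A ∈ univ.filter c, (A.card : ℝ) * f A := by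
  simp only [sum_filter, ite_and]
  rw [Finset.sum_comm]
  refine Finset.sum_congr rfl fun A _ => ?_
  by_cases hc : c A
  · simp [hc, Finset.sum_ite_mem, mul_comm]
  · simp [hc]

/-- For a fractional `K`-partition `Φ` and the associated probability assignment
`p(x)(y) = Σ_{A ∋ x,y} Φ(A)/|A|`, adjacent vertices satisfy
`‖p(x) − p(y)‖₁ ≤ ∂Φ(x) + ∂Φ(y)`. -/
theorem stmt8 {V : Type*} [Fintype V] [DecidableEq V]
    (G : SimpleGraph V) [DecidableRel G.Adj]
    (d K : ℕ) (hdeg : ∀ v, G.degree v ≤ d) (hK : 1 ≤ K)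
    (Φ : Finset V → ℝ) (hΦ0 : ∀ A, 0 ≤ Φ A)
    (hsupp : ∀ A, Φ A ≠ 0 → A.card ≤ K ∧ (G.induce (↑A : Set V)).Connected)
    (hpart : ∀ x : V, ∑ A ∈ univ.filter (fun A : Finset V => x ∈ A), Φ A = 1)
    (p : V → V → ℝ)
    (hp : ∀ x y : V,
      p x y = ∑ A ∈ univ.filter (fun A : Finset V => x ∈ A ∧ y ∈ A), Φ A / A.card)
    (x y : V) (hxy : G.Adj x y) :
    ∑ z : V, |p x z - p y z| ≤
      (∑ A ∈ univ.filter (fun A : Finset V => x ∈ innerBoundary G A), Φ A) +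
      (∑ A ∈ univ.filter (fun A : Finset V => y ∈ innerBoundary G A), Φ A) := by
  set f : Finset V → ℝ := fun A => Φ A / A.card with hf
  have hf0 : ∀ A, 0 ≤ f A := fun A => div_nonneg (hΦ0 A) (Nat.cast_nonneg _)
  set g1 : V → ℝ := fun z =>
    ∑ A ∈ univ.filter (fun A => (x ∈ A ∧ y ∉ A) ∧ z ∈ A), f A with hg1
  set g2 : V → ℝ := fun z =>
    ∑ A ∈ univ.filter (fun A => (y ∈ A ∧ x ∉ A) ∧ z ∈ A), f A with hg2
  have key : ∀ z, p x z - p y z = g1 z - g2 z := by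
    intro z
    rw [hp, hp, hg1, hg2]
    simp only [sum_filter, ← Finset.sum_sub_distrib]
    refine Finset.sum_congr rfl fun A _ => ?_
    by_cases hx : x ∈ A <;> by_cases hy : y ∈ A <;> by_cases hz : z ∈ A <;>
      simp [hx, hy, hz]
  have habs : ∀ z, |p x z - p y z| ≤ g1 z + g2 z := by
    intro z
    rw [key z, abs_le]
    have h1 : 0 ≤ g1 z := Finset.sum_nonneg fun A _ => hf0 A
    have h2 : 0 ≤ g2 z := Finset.sum_nonneg fun A _ => hf0 A
    constructor <;> linarith
  calc ∑ z : V, |p x z - p y z| ≤ ∑ z : V, (g1 z + g2 z) :=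
        Finset.sum_le_sum fun z _ => habs z
    _ = (∑ z : V, g1 z) + ∑ z : V, g2 z := Finset.sum_add_distrib
    _ ≤ _ := by
        gcongr
        · rw [hg1, swapsum]
          have : ∀ A ∈ univ.filter (fun A : Finset V => x ∈ A ∧ y ∉ A),
              (A.card : ℝ) * f A = Φ A := by
            intro A hA
            simp only [mem_filter] at hA
            have hc : (A.card : ℝ) ≠ 0 := by
              simp [Finset.card_ne_zero_of_mem hA.2.1]
            simp only [hf]
            field_simp
          rw [Finset.sum_congr rfl this]
          refine Finset.sum_le_sum_of_subset_of_nonneg ?_ fun A _ _ => hΦ0 A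
          intro A hA
          simp only [mem_filter, mem_univ, true_and, innerBoundary] at hA ⊢
          exact ⟨hA.1, y, hA.2, hxy⟩
        · rw [hg2, swapsum]
          have : ∀ A ∈ univ.filter (fun A : Finset V => y ∈ A ∧ x ∉ A),
              (A.card : ℝ) * f A = Φ A := by
            intro A hA
            simp only [mem_filter] at hA
            have hc : (A.card : ℝ) ≠ 0 := by
              simp [Finset.card_ne_zero_of_mem hA.2.1]
            simp only [hf]
            field_simp
          rw [Finset.sum_congr rfl this]
          refine Finset.sum_le_sum_of_subset_of_nonneg ?_ fun A _ _ => hΦ0 A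
          intro A hA
          simp only [mem_filter, mem_univ, true_and, innerBoundary] at hA ⊢
          exact ⟨hA.1, x, hA.2, hxy.symm⟩
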